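/- Let ℓ ≥ 24 be an integer. Take the complete bipartite graph K_{ℓ,ℓ} with bipartition (A, B); add three more edges joining three disjoint pairs of vertices in A; then subdivide every edge between A and B exactly once, and subdivide each of the three additional edges either two or four times (the choices for the three edges being arbitrary and possibly different). The resulting graph has a hole of length exactly ℓ. -/
import Mathlib


open SimpleGraph

/-- `G` has a hole (induced cycle of length at least 4) of length `n`. -/
def HasHole {V : Type*} (G : SimpleGraph V) (n : ℕ) : Prop :=
  4 ≤ n ∧ Nonempty (cycleGraph n ↪g G)

/-- Vertices of the graph obtained from `K_{ℓ,ℓ}` with bipartition `(A, B)`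
(the two copies of `Fin ℓ`), after subdividing each `A`-`B` edge once (giving the
vertices `Fin ℓ × Fin ℓ`) and adding, for `j : Fin 3`, a path of `s j` new vertices
joining a pair of vertices of `A`. -/
abbrev SubdivVtx (ℓ : ℕ) (s : Fin 3 → ℕ) : Type :=
  (Fin ℓ ⊕ Fin ℓ) ⊕ ((Fin ℓ × Fin ℓ) ⊕ (Σ j : Fin 3, Fin (s j)))

/-- The basic adjacency relation of the construction: for `j : Fin 3`, the pair
`x j, y j` of vertices of `A` is joined by a path through the `s j` new vertices
`⟨j, 0⟩, …, ⟨j, s j - 1⟩`; each subdivision vertex `(a, b)` is joined to `a ∈ A`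
and `b ∈ B`. -/
def subdivRel (ℓ : ℕ) (s : Fin 3 → ℕ) (x y : Fin 3 → Fin ℓ) :
    SubdivVtx ℓ s → SubdivVtx ℓ s → Prop
  | Sum.inl (Sum.inl a), Sum.inr (Sum.inl p) => p.1 = a
  | Sum.inl (Sum.inr b), Sum.inr (Sum.inl p) => p.2 = b
  | Sum.inl (Sum.inl a), Sum.inr (Sum.inr ⟨j, i⟩) =>
      (a = x j ∧ (i : ℕ) = 0) ∨ (a = y j ∧ (i : ℕ) = s j - 1)
  | Sum.inr (Sum.inr ⟨j, i⟩), Sum.inr (Sum.inr ⟨j', i'⟩) =>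
      j = j' ∧ (i : ℕ) + 1 = (i' : ℕ)
  | _, _ => False


namespace Hole
variable {ℓ : ℕ} {s : Fin 3 → ℕ} {x y : Fin 3 → Fin ℓ}

def Av (a : Fin ℓ) : SubdivVtx ℓ s := Sum.inl (Sum.inl a)
def Bv (b : Fin ℓ) : SubdivVtx ℓ s := Sum.inl (Sum.inr b)
def Sv (a b : Fin ℓ) : SubdivVtx ℓ s := Sum.inr (Sum.inl (a, b))
def Pv (j : Fin 3) (i : Fin (s j)) : SubdivVtx ℓ s := Sum.inr (Sum.inr ⟨j, i⟩)

@[simp] lemma av_inj {a a' : Fin ℓ} : (Av a : SubdivVtx ℓ s) = Av a' ↔ a = a' := by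
  simp [Av]
@[simp] lemma bv_inj {b b' : Fin ℓ} : (Bv b : SubdivVtx ℓ s) = Bv b' ↔ b = b' := by
  simp [Bv]
@[simp] lemma sv_inj {a a' b b' : Fin ℓ} :
    (Sv a b : SubdivVtx ℓ s) = Sv a' b' ↔ a = a' ∧ b = b' := by
  simp [Sv, Prod.ext_iff]
@[simp] lemma pv_inj {j j' : Fin 3} {i : Fin (s j)} {i' : Fin (s j')} :
    (Pv j i : SubdivVtx ℓ s) = Pv j' i' ↔ j = j' ∧ (i : ℕ) = (i' : ℕ) := by
  simp only [Pv, Sum.inr.injEq, Sigma.ext_iff]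
  constructor
  · rintro ⟨rfl, h⟩; rw [heq_iff_eq] at h; exact ⟨rfl, by rw [h]⟩
  · rintro ⟨rfl, h⟩; exact ⟨rfl, heq_of_eq (Fin.ext h)⟩
@[simp] lemma av_ne_bv {a b : Fin ℓ} : (Av a : SubdivVtx ℓ s) ≠ Bv b := by simp [Av, Bv]
@[simp] lemma bv_ne_av {a b : Fin ℓ} : (Bv b : SubdivVtx ℓ s) ≠ Av a := by simp [Av, Bv]
@[simp] lemma av_ne_sv {a a' b : Fin ℓ} : (Av a : SubdivVtx ℓ s) ≠ Sv a' b := by simp [Av, Sv]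
@[simp] lemma sv_ne_av {a a' b : Fin ℓ} : (Sv a' b : SubdivVtx ℓ s) ≠ Av a := by simp [Av, Sv]
@[simp] lemma av_ne_pv {a : Fin ℓ} {j : Fin 3} {i : Fin (s j)} :
    (Av a : SubdivVtx ℓ s) ≠ Pv j i := by simp [Av, Pv]
@[simp] lemma pv_ne_av {a : Fin ℓ} {j : Fin 3} {i : Fin (s j)} :
    (Pv j i : SubdivVtx ℓ s) ≠ Av a := by simp [Av, Pv]
@[simp] lemma bv_ne_sv {a b b' : Fin ℓ} : (Bv b : SubdivVtx ℓ s) ≠ Sv a b' := by simp [Bv, Sv]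
@[simp] lemma sv_ne_bv {a b b' : Fin ℓ} : (Sv a b' : SubdivVtx ℓ s) ≠ Bv b := by simp [Bv, Sv]
@[simp] lemma bv_ne_pv {b : Fin ℓ} {j : Fin 3} {i : Fin (s j)} :
    (Bv b : SubdivVtx ℓ s) ≠ Pv j i := by simp [Bv, Pv]
@[simp] lemma pv_ne_bv {b : Fin ℓ} {j : Fin 3} {i : Fin (s j)} :
    (Pv j i : SubdivVtx ℓ s) ≠ Bv b := by simp [Bv, Pv]
@[simp] lemma sv_ne_pv {a b : Fin ℓ} {j : Fin 3} {i : Fin (s j)} :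
    (Sv a b : SubdivVtx ℓ s) ≠ Pv j i := by simp [Sv, Pv]
@[simp] lemma pv_ne_sv {a b : Fin ℓ} {j : Fin 3} {i : Fin (s j)} :
    (Pv j i : SubdivVtx ℓ s) ≠ Sv a b := by simp [Sv, Pv]

section adj
variable (x y)

@[simp] lemma adj_av_av {a a' : Fin ℓ} :
    ¬ (SimpleGraph.fromRel (subdivRel ℓ s x y)).Adj (Av a) (Av a') := by
  simp [fromRel_adj, subdivRel, Av]
@[simp] lemma adj_av_bv {a b : Fin ℓ} :
    ¬ (SimpleGraph.fromRel (subdivRel ℓ s x y)).Adj (Av a) (Bv b) := by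
  simp [fromRel_adj, subdivRel, Av, Bv]
@[simp] lemma adj_bv_av {a b : Fin ℓ} :
    ¬ (SimpleGraph.fromRel (subdivRel ℓ s x y)).Adj (Bv b) (Av a) := by
  simp [fromRel_adj, subdivRel, Av, Bv]
@[simp] lemma adj_bv_bv {b b' : Fin ℓ} :
    ¬ (SimpleGraph.fromRel (subdivRel ℓ s x y)).Adj (Bv b) (Bv b') := by
  simp [fromRel_adj, subdivRel, Bv]
@[simp] lemma adj_av_sv {a a' b : Fin ℓ} :
    (SimpleGraph.fromRel (subdivRel ℓ s x y)).Adj (Av a) (Sv a' b) ↔ a = a' := by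
  simp [fromRel_adj, subdivRel, Av, Sv, eq_comm]
@[simp] lemma adj_sv_av {a a' b : Fin ℓ} :
    (SimpleGraph.fromRel (subdivRel ℓ s x y)).Adj (Sv a' b) (Av a) ↔ a = a' := by
  simp [fromRel_adj, subdivRel, Av, Sv, eq_comm]
@[simp] lemma adj_bv_sv {a b b' : Fin ℓ} :
    (SimpleGraph.fromRel (subdivRel ℓ s x y)).Adj (Bv b) (Sv a b') ↔ b = b' := by
  simp [fromRel_adj, subdivRel, Bv, Sv, eq_comm]
@[simp] lemma adj_sv_bv {a b b' : Fin ℓ} :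
    (SimpleGraph.fromRel (subdivRel ℓ s x y)).Adj (Sv a b') (Bv b) ↔ b = b' := by
  simp [fromRel_adj, subdivRel, Bv, Sv, eq_comm]
@[simp] lemma adj_sv_sv {a a' b b' : Fin ℓ} :
    ¬ (SimpleGraph.fromRel (subdivRel ℓ s x y)).Adj (Sv a b) (Sv a' b') := by
  simp [fromRel_adj, subdivRel, Sv]
@[simp] lemma adj_av_pv {a : Fin ℓ} {j : Fin 3} {i : Fin (s j)} :
    (SimpleGraph.fromRel (subdivRel ℓ s x y)).Adj (Av a) (Pv j i) ↔
      ((a = x j ∧ (i : ℕ) = 0) ∨ (a = y j ∧ (i : ℕ) = s j - 1)) := by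
  simp [fromRel_adj, subdivRel, Av, Pv]
@[simp] lemma adj_pv_av {a : Fin ℓ} {j : Fin 3} {i : Fin (s j)} :
    (SimpleGraph.fromRel (subdivRel ℓ s x y)).Adj (Pv j i) (Av a) ↔
      ((a = x j ∧ (i : ℕ) = 0) ∨ (a = y j ∧ (i : ℕ) = s j - 1)) := by
  rw [SimpleGraph.adj_comm]; exact adj_av_pv x y
@[simp] lemma adj_bv_pv {b : Fin ℓ} {j : Fin 3} {i : Fin (s j)} :
    ¬ (SimpleGraph.fromRel (subdivRel ℓ s x y)).Adj (Bv b) (Pv j i) := by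
  simp [fromRel_adj, subdivRel, Bv, Pv]
@[simp] lemma adj_pv_bv {b : Fin ℓ} {j : Fin 3} {i : Fin (s j)} :
    ¬ (SimpleGraph.fromRel (subdivRel ℓ s x y)).Adj (Pv j i) (Bv b) := by
  simp [fromRel_adj, subdivRel, Bv, Pv]
@[simp] lemma adj_sv_pv {a b : Fin ℓ} {j : Fin 3} {i : Fin (s j)} :
    ¬ (SimpleGraph.fromRel (subdivRel ℓ s x y)).Adj (Sv a b) (Pv j i) := by
  simp [fromRel_adj, subdivRel, Sv, Pv]
@[simp] lemma adj_pv_sv {a b : Fin ℓ} {j : Fin 3} {i : Fin (s j)} :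
    ¬ (SimpleGraph.fromRel (subdivRel ℓ s x y)).Adj (Pv j i) (Sv a b) := by
  simp [fromRel_adj, subdivRel, Sv, Pv]
@[simp] lemma adj_pv_pv {j j' : Fin 3} {i : Fin (s j)} {i' : Fin (s j')} :
    (SimpleGraph.fromRel (subdivRel ℓ s x y)).Adj (Pv j i) (Pv j' i') ↔
      (j = j' ∧ ((i : ℕ) + 1 = (i' : ℕ) ∨ (i' : ℕ) + 1 = (i : ℕ))) := by
  simp only [fromRel_adj, subdivRel, Pv, ne_eq, Sum.inr.injEq]
  constructor
  · rintro ⟨hne, (⟨rfl, h⟩ | ⟨rfl, h⟩)⟩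
    · exact ⟨rfl, Or.inl h⟩
    · exact ⟨rfl, Or.inr h⟩
  · rintro ⟨rfl, (h | h)⟩
    · refine ⟨fun hh => ?_, Or.inl ⟨rfl, h⟩⟩
      have h2 := (Sigma.ext_iff.mp hh).2
      rw [heq_iff_eq] at h2
      have h3 : (i : ℕ) = (i' : ℕ) := congrArg Fin.val h2
      omega
    · refine ⟨fun hh => ?_, Or.inr ⟨rfl, h⟩⟩
      have h2 := (Sigma.ext_iff.mp hh).2
      rw [heq_iff_eq] at h2
      have h3 : (i : ℕ) = (i' : ℕ) := congrArg Fin.val h2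
      omega
end adj

/-- Bundle of an "induced path" in the graph: `P 0, …, P (q-1)` is an induced path
from `Av u` to `Av w`, all of whose `A`-coordinates lie in `SA` and `B`-coordinates in `SB`. -/
structure IPath (ℓ : ℕ) (s : Fin 3 → ℕ) (x y : Fin 3 → Fin ℓ) (q : ℕ) where
  P : ℕ → SubdivVtx ℓ s
  u : Fin ℓ
  w : Fin ℓ
  SA : Finset (Fin ℓ)
  SB : Finset (Fin ℓ)
  hq : 2 ≤ q
  inj : ∀ {i j}, i < q → j < q → P i = P j → i = j
  adj : ∀ {i j}, i < q → j < q →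
    ((SimpleGraph.fromRel (subdivRel ℓ s x y)).Adj (P i) (P j) ↔ (i + 1 = j ∨ j + 1 = i))
  first : P 0 = Av u
  last : P (q - 1) = Av w
  huw : u ≠ w
  memA : ∀ {i a}, i < q → P i = Av a → a ∈ SA
  memB : ∀ {i b}, i < q → P i = Bv b → b ∈ SB
  memS : ∀ {i a b}, i < q → P i = Sv a b → a ∈ SA ∧ b ∈ SB
  memP : ∀ {i j k}, i < q → P i = Pv j k → x j ∈ SA ∧ y j ∈ SA

lemma vtx_cases (v : SubdivVtx ℓ s) :
    (∃ a, v = Av a) ∨ (∃ b, v = Bv b) ∨ (∃ a b, v = Sv a b) ∨ (∃ j i, v = Pv j i) := by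
  rcases v with (a | b) | (⟨a, b⟩ | ⟨j, i⟩)
  · exact Or.inl ⟨a, rfl⟩
  · exact Or.inr (Or.inl ⟨b, rfl⟩)
  · exact Or.inr (Or.inr (Or.inl ⟨a, b, rfl⟩))
  · exact Or.inr (Or.inr (Or.inr ⟨j, i, rfl⟩))

lemma cycleGraph_adj_iff {n : ℕ} (hn : 5 ≤ n) (u v : Fin n) :
    (cycleGraph n).Adj u v ↔ ((u : ℕ) + 1 = v ∨ (v : ℕ) + 1 = u ∨
      ((u : ℕ) = 0 ∧ (v : ℕ) = n - 1) ∨ ((v : ℕ) = 0 ∧ (u : ℕ) = n - 1)) := by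
  obtain ⟨m, rfl⟩ : ∃ m, n = m + 2 := ⟨n - 2, by omega⟩
  rw [cycleGraph_adj]
  have hu := u.isLt; have hv := v.isLt
  simp only [sub_eq_iff_eq_add, Fin.ext_iff, Fin.add_def, Fin.val_one]
  constructor
  · rintro (h | h)
    · rcases Nat.lt_or_ge (1 + (v : ℕ)) (m + 2) with hlt | hge
      · rw [Nat.mod_eq_of_lt hlt] at h; omega
      · rw [(by omega : 1 + (v : ℕ) = m + 2), Nat.mod_self] at h; omega
    · rcases Nat.lt_or_ge (1 + (u : ℕ)) (m + 2) with hlt | hge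
      · rw [Nat.mod_eq_of_lt hlt] at h; omega
      · rw [(by omega : 1 + (u : ℕ) = m + 2), Nat.mod_self] at h; omega
  · rintro (h | h | ⟨h1, h2⟩ | ⟨h1, h2⟩)
    · right; rw [Nat.mod_eq_of_lt (by omega)]; omega
    · left; rw [Nat.mod_eq_of_lt (by omega)]; omega
    · left; rw [(by omega : 1 + (v : ℕ) = m + 2), Nat.mod_self]; omega
    · right; rw [(by omega : 1 + (u : ℕ) = m + 2), Nat.mod_self]; omega

/-- The cyclic sequence: `P` on `[0, q)`, then a "grid" path through fresh vertices. -/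
def cyc (q : ℕ) (P : ℕ → SubdivVtx ℓ s) (AG BG : ℕ → Fin ℓ) (i : ℕ) : SubdivVtx ℓ s :=
  if i < q then P i
  else if (i - q) % 4 = 0 then Sv (AG ((i - q) / 4)) (BG ((i - q) / 4))
  else if (i - q) % 4 = 1 then Bv (BG ((i - q) / 4))
  else if (i - q) % 4 = 2 then Sv (AG ((i - q) / 4 + 1)) (BG ((i - q) / 4))
  else Av (AG ((i - q) / 4 + 1))

variable {q : ℕ} {P : ℕ → SubdivVtx ℓ s} {AG BG : ℕ → Fin ℓ}

lemma cyc_lt {i : ℕ} (h : i < q) : cyc q P AG BG i = P i := by simp [cyc, h]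

lemma cyc_ge0 {r k : ℕ} (h : r = 4 * k) :
    cyc q P AG BG (q + r) = Sv (AG k) (BG k) := by
  have h1 : ¬ (q + r < q) := by omega
  have h2 : q + r - q = r := by omega
  have h3 : r % 4 = 0 := by omega
  have h4 : r / 4 = k := by omega
  simp [cyc, h1, h2, h3, h4]

lemma cyc_ge1 {r k : ℕ} (h : r = 4 * k + 1) :
    cyc q P AG BG (q + r) = Bv (BG k) := by
  have h1 : ¬ (q + r < q) := by omega
  have h2 : q + r - q = r := by omega
  have h3 : r % 4 = 1 := by omega
  have h4 : r / 4 = k := by omega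
  simp [cyc, h1, h2, h3, h4]

lemma cyc_ge2 {r k : ℕ} (h : r = 4 * k + 2) :
    cyc q P AG BG (q + r) = Sv (AG (k + 1)) (BG k) := by
  have h1 : ¬ (q + r < q) := by omega
  have h2 : q + r - q = r := by omega
  have h3 : r % 4 = 2 := by omega
  have h4 : r / 4 = k := by omega
  simp [cyc, h1, h2, h3, h4]

lemma cyc_ge3 {r k : ℕ} (h : r = 4 * k + 3) :
    cyc q P AG BG (q + r) = Av (AG (k + 1)) := by
  have h1 : ¬ (q + r < q) := by omega
  have h2 : q + r - q = r := by omega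
  have h3 : r % 4 = 3 := by omega
  have h4 : r / 4 = k := by omega
  simp [cyc, h1, h2, h3, h4]

theorem glue {t : ℕ} (ip : IPath ℓ s x y q) (ht : 1 ≤ t)
    (hlen : ℓ + 1 = q + 4 * t)
    (hcA : ip.SA.card + t ≤ ℓ + 1) (hcB : ip.SB.card + t ≤ ℓ) :
    Nonempty (cycleGraph ℓ ↪g SimpleGraph.fromRel (subdivRel ℓ s x y)) := by
  have hq2 := ip.hq
  have hℓ5 : 5 ≤ ℓ := by omega
  have hwSA : ip.w ∈ ip.SA := ip.memA (by omega) ip.last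
  have huSA : ip.u ∈ ip.SA := ip.memA (by omega) ip.first
  -- fresh A-vertices
  obtain ⟨AG, hAG0, hAGt, hAGmem, hAGinj⟩ :
      ∃ AG : ℕ → Fin ℓ, AG 0 = ip.w ∧ AG t = ip.u ∧
        (∀ k, 0 < k → k < t → AG k ∉ ip.SA) ∧
        (∀ k k', k ≤ t → k' ≤ t → AG k = AG k' → k = k') := by
    have hcard : t - 1 ≤ (ip.SAᶜ).card := by
      rw [Finset.card_compl, Fintype.card_fin]; omega
    set e := Finset.orderEmbOfCardLe (ip.SAᶜ) hcard with he
    obtain ⟨E, hEmem, hEinj⟩ :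
        ∃ E : ℕ → Fin ℓ, (∀ m, m < t - 1 → E m ∉ ip.SA) ∧
          (∀ m m', m < t - 1 → m' < t - 1 → E m = E m' → m = m') := by
      refine ⟨fun m => if h : m < t - 1 then e ⟨m, h⟩ else ip.u,
        fun m hm => ?_, fun m m' hm hm' hEq => ?_⟩
      · simp only [dif_pos hm]
        have := Finset.orderEmbOfCardLe_mem (ip.SAᶜ) hcard ⟨m, hm⟩
        simpa using this
      · simp only [dif_pos hm, dif_pos hm'] at hEq
        have := e.injective hEq
        simp only [Fin.mk.injEq] at this
        exact this
    refine ⟨fun k => if k = 0 then ip.w else if k < t then E (k - 1) else ip.u,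
      by simp, ?_, ?_, ?_⟩
    · simp only [if_neg (by omega : ¬ (t = 0)), if_neg (lt_irrefl t)]
    · intro k h0 hk
      simp only [if_neg (by omega : ¬ (k = 0)), if_pos hk]
      exact hEmem _ (by omega)
    · intro k k' hk hk' hEq
      dsimp only at hEq
      by_cases hk0 : k = 0 <;> by_cases hk'0 : k' = 0
      · omega
      · rw [if_pos hk0, if_neg hk'0] at hEq
        by_cases h : k' < t
        · rw [if_pos h] at hEq
          refine absurd ?_ (hEmem (k' - 1) (by omega))
          rw [← hEq]; exact hwSA
        · rw [if_neg h] at hEq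
          exact absurd hEq.symm ip.huw
      · rw [if_neg hk0, if_pos hk'0] at hEq
        by_cases h : k < t
        · rw [if_pos h] at hEq
          refine absurd ?_ (hEmem (k - 1) (by omega))
          rw [hEq]; exact hwSA
        · rw [if_neg h] at hEq
          exact absurd hEq ip.huw
      · rw [if_neg hk0, if_neg hk'0] at hEq
        by_cases h : k < t <;> by_cases h' : k' < t
        · rw [if_pos h, if_pos h'] at hEq
          have := hEinj _ _ (by omega) (by omega) hEq
          omega
        · rw [if_pos h, if_neg h'] at hEq
          refine absurd ?_ (hEmem (k - 1) (by omega))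
          rw [hEq]; exact huSA
        · rw [if_neg h, if_pos h'] at hEq
          refine absurd ?_ (hEmem (k' - 1) (by omega))
          rw [← hEq]; exact huSA
        · omega
  -- fresh B-vertices
  obtain ⟨BG, hBGmem, hBGinj⟩ :
      ∃ BG : ℕ → Fin ℓ, (∀ k, k < t → BG k ∉ ip.SB) ∧
        (∀ k k', k < t → k' < t → BG k = BG k' → k = k') := by
    have hcard : t ≤ (ip.SBᶜ).card := by
      rw [Finset.card_compl, Fintype.card_fin]; omega
    set e := Finset.orderEmbOfCardLe (ip.SBᶜ) hcard with he
    have hmem : ∀ i, (e i : Fin ℓ) ∉ ip.SB := fun i => by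
      have := Finset.orderEmbOfCardLe_mem (ip.SBᶜ) hcard i
      simpa using this
    refine ⟨fun k => if h : k < t then e ⟨k, h⟩ else ip.u, fun k hk => ?_, fun k k' hk hk' hEq => ?_⟩
    · simp only [dif_pos hk]; exact hmem _
    · simp only [dif_pos hk, dif_pos hk'] at hEq
      have := e.injective hEq
      simp only [Fin.mk.injEq] at this
      exact this
  -- no adjacency between P-part and interior grid vertices
  have mix : ∀ i r, i < q → r ≤ 4 * t - 2 →
      (SimpleGraph.fromRel (subdivRel ℓ s x y)).Adj (ip.P i) (cyc q ip.P AG BG (q + r)) →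
      (i = q - 1 ∧ r = 0) ∨ (i = 0 ∧ r = 4 * t - 2) := by
    intro i r hi hr hadj
    have h4 : r = 4 * (r / 4) ∨ r = 4 * (r / 4) + 1 ∨ r = 4 * (r / 4) + 2 ∨ r = 4 * (r / 4) + 3 := by
      omega
    set k := r / 4 with hk
    rcases h4 with h4 | h4 | h4 | h4
    · rw [cyc_ge0 h4] at hadj
      rcases vtx_cases (ip.P i) with ⟨a, hPi⟩ | ⟨b, hPi⟩ | ⟨a, b, hPi⟩ | ⟨j, kk, hPi⟩ <;>
        rw [hPi] at hadj
      · rw [adj_av_sv] at hadj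
        by_cases hk0 : k = 0
        · rw [hk0, hAG0] at hadj
          have : ip.P i = ip.P (q - 1) := by rw [hPi, hadj, ip.last]
          exact Or.inl ⟨ip.inj hi (by omega) this, by omega⟩
        · have hklt : k < t := by omega
          rw [hadj] at hPi
          exact absurd (ip.memA hi hPi) (hAGmem k (by omega) hklt)
      · rw [adj_bv_sv] at hadj
        rw [hadj] at hPi
        exact absurd (ip.memB hi hPi) (hBGmem k (by omega))
      · exact absurd hadj (adj_sv_sv x y)
      · exact absurd hadj (adj_pv_sv x y)
    · rw [cyc_ge1 h4] at hadj
      rcases vtx_cases (ip.P i) with ⟨a, hPi⟩ | ⟨b, hPi⟩ | ⟨a, b, hPi⟩ | ⟨j, kk, hPi⟩ <;>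
        rw [hPi] at hadj
      · exact absurd hadj (adj_av_bv x y)
      · exact absurd hadj (adj_bv_bv x y)
      · rw [adj_sv_bv] at hadj
        rw [← hadj] at hPi
        exact absurd (ip.memS hi hPi).2 (hBGmem k (by omega))
      · exact absurd hadj (adj_pv_bv x y)
    · rw [cyc_ge2 h4] at hadj
      rcases vtx_cases (ip.P i) with ⟨a, hPi⟩ | ⟨b, hPi⟩ | ⟨a, b, hPi⟩ | ⟨j, kk, hPi⟩ <;>
        rw [hPi] at hadj
      · rw [adj_av_sv] at hadj
        by_cases hkt : k + 1 = t
        · rw [hkt, hAGt] at hadj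
          have : ip.P i = ip.P 0 := by rw [hPi, hadj, ip.first]
          exact Or.inr ⟨ip.inj hi (by omega) this, by omega⟩
        · rw [hadj] at hPi
          exact absurd (ip.memA hi hPi) (hAGmem (k + 1) (by omega) (by omega))
      · rw [adj_bv_sv] at hadj
        rw [hadj] at hPi
        exact absurd (ip.memB hi hPi) (hBGmem k (by omega))
      · exact absurd hadj (adj_sv_sv x y)
      · exact absurd hadj (adj_pv_sv x y)
    · rw [cyc_ge3 h4] at hadj
      have hint : AG (k + 1) ∉ ip.SA := hAGmem (k + 1) (by omega) (by omega)
      rcases vtx_cases (ip.P i) with ⟨a, hPi⟩ | ⟨b, hPi⟩ | ⟨a, b, hPi⟩ | ⟨j, kk, hPi⟩ <;>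
        rw [hPi] at hadj
      · exact absurd hadj (adj_av_av x y)
      · exact absurd hadj (adj_bv_av x y)
      · rw [adj_sv_av] at hadj
        rw [hadj] at hint
        exact absurd (ip.memS hi hPi).1 hint
      · rw [adj_pv_av] at hadj
        rcases hadj with ⟨h, -⟩ | ⟨h, -⟩
        · rw [h] at hint; exact absurd (ip.memP hi hPi).1 hint
        · rw [h] at hint; exact absurd (ip.memP hi hPi).2 hint
  -- grid-grid adjacency forces consecutive positions
  have gg : ∀ r r', r ≤ 4 * t - 2 → r' ≤ 4 * t - 2 →
      (SimpleGraph.fromRel (subdivRel ℓ s x y)).Adj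
        (cyc q ip.P AG BG (q + r)) (cyc q ip.P AG BG (q + r')) →
      r + 1 = r' ∨ r' + 1 = r := by
    intro r r' hr hr' hadj
    have h4 : r = 4 * (r / 4) ∨ r = 4 * (r / 4) + 1 ∨ r = 4 * (r / 4) + 2 ∨ r = 4 * (r / 4) + 3 := by
      omega
    have h4' : r' = 4 * (r' / 4) ∨ r' = 4 * (r' / 4) + 1 ∨ r' = 4 * (r' / 4) + 2 ∨
        r' = 4 * (r' / 4) + 3 := by omega
    set k := r / 4 with hk
    set k' := r' / 4 with hk'
    rcases h4 with h4 | h4 | h4 | h4 <;> rcases h4' with h4' | h4' | h4' | h4'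
    · rw [cyc_ge0 h4, cyc_ge0 h4'] at hadj; exact absurd hadj (adj_sv_sv x y)
    · rw [cyc_ge0 h4, cyc_ge1 h4'] at hadj
      rw [adj_sv_bv] at hadj
      have := hBGinj _ _ (by omega) (by omega) hadj
      omega
    · rw [cyc_ge0 h4, cyc_ge2 h4'] at hadj; exact absurd hadj (adj_sv_sv x y)
    · rw [cyc_ge0 h4, cyc_ge3 h4'] at hadj
      rw [adj_sv_av] at hadj
      have := hAGinj _ _ (by omega) (by omega) hadj
      omega
    · rw [cyc_ge1 h4, cyc_ge0 h4'] at hadj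
      rw [adj_bv_sv] at hadj
      have := hBGinj _ _ (by omega) (by omega) hadj
      omega
    · rw [cyc_ge1 h4, cyc_ge1 h4'] at hadj; exact absurd hadj (adj_bv_bv x y)
    · rw [cyc_ge1 h4, cyc_ge2 h4'] at hadj
      rw [adj_bv_sv] at hadj
      have := hBGinj _ _ (by omega) (by omega) hadj
      omega
    · rw [cyc_ge1 h4, cyc_ge3 h4'] at hadj; exact absurd hadj (adj_bv_av x y)
    · rw [cyc_ge2 h4, cyc_ge0 h4'] at hadj; exact absurd hadj (adj_sv_sv x y)
    · rw [cyc_ge2 h4, cyc_ge1 h4'] at hadj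
      rw [adj_sv_bv] at hadj
      have := hBGinj _ _ (by omega) (by omega) hadj
      omega
    · rw [cyc_ge2 h4, cyc_ge2 h4'] at hadj; exact absurd hadj (adj_sv_sv x y)
    · rw [cyc_ge2 h4, cyc_ge3 h4'] at hadj
      rw [adj_sv_av] at hadj
      have := hAGinj _ _ (by omega) (by omega) hadj
      omega
    · rw [cyc_ge3 h4, cyc_ge0 h4'] at hadj
      rw [adj_av_sv] at hadj
      have := hAGinj _ _ (by omega) (by omega) hadj
      omega
    · rw [cyc_ge3 h4, cyc_ge1 h4'] at hadj; exact absurd hadj (adj_av_bv x y)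
    · rw [cyc_ge3 h4, cyc_ge2 h4'] at hadj
      rw [adj_av_sv] at hadj
      have := hAGinj _ _ (by omega) (by omega) hadj
      omega
    · rw [cyc_ge3 h4, cyc_ge3 h4'] at hadj; exact absurd hadj (adj_av_av x y)
  -- consecutive positions are adjacent
  have edge : ∀ i, i + 1 < ℓ →
      (SimpleGraph.fromRel (subdivRel ℓ s x y)).Adj
        (cyc q ip.P AG BG i) (cyc q ip.P AG BG (i + 1)) := by
    intro i hi
    by_cases h1 : i + 1 < q
    · rw [cyc_lt (by omega), cyc_lt h1]
      exact (ip.adj (by omega) h1).mpr (Or.inl rfl)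
    · by_cases h2 : i < q
      · have hiq : i = q - 1 := by omega
        have hi1 : i + 1 = q + 0 := by omega
        rw [cyc_lt h2, hi1, cyc_ge0 (by omega : (0:ℕ) = 4 * 0), hiq, ip.last, hAG0]
        rw [adj_av_sv]
      · have hi0 : i = q + (i - q) := by omega
        set r := i - q with hrdef
        have h4 : r = 4 * (r / 4) ∨ r = 4 * (r / 4) + 1 ∨ r = 4 * (r / 4) + 2 ∨
            r = 4 * (r / 4) + 3 := by omega
        have hi1 : i + 1 = q + (r + 1) := by omega
        set k := r / 4 with hk
        rcases h4 with h | h | h | h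
        · rw [hi1, hi0, cyc_ge0 h, cyc_ge1 (by omega : r + 1 = 4 * k + 1), adj_sv_bv]
        · rw [hi1, hi0, cyc_ge1 h, cyc_ge2 (by omega : r + 1 = 4 * k + 2), adj_bv_sv]
        · rw [hi1, hi0, cyc_ge2 h, cyc_ge3 (by omega : r + 1 = 4 * k + 3), adj_sv_av]
        · rw [hi1, hi0, cyc_ge3 h, cyc_ge0 (by omega : r + 1 = 4 * (k + 1)), adj_av_sv]
  have edge0 : (SimpleGraph.fromRel (subdivRel ℓ s x y)).Adj
      (cyc q ip.P AG BG 0) (cyc q ip.P AG BG (ℓ - 1)) := by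
    have hl1 : ℓ - 1 = q + (4 * (t - 1) + 2) := by omega
    rw [cyc_lt (by omega : 0 < q), ip.first, hl1, cyc_ge2 rfl,
      (by omega : t - 1 + 1 = t), hAGt, adj_av_sv]
  -- P-part and grid part are disjoint
  have mixne : ∀ i r, i < q → r ≤ 4 * t - 2 → ip.P i ≠ cyc q ip.P AG BG (q + r) := by
    intro i r hi hr hEq
    have h4 : r = 4 * (r / 4) ∨ r = 4 * (r / 4) + 1 ∨ r = 4 * (r / 4) + 2 ∨
        r = 4 * (r / 4) + 3 := by omega
    set k := r / 4 with hk
    rcases h4 with h | h | h | h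
    · rw [cyc_ge0 h] at hEq
      exact absurd (ip.memS hi hEq).2 (hBGmem k (by omega))
    · rw [cyc_ge1 h] at hEq
      exact absurd (ip.memB hi hEq) (hBGmem k (by omega))
    · rw [cyc_ge2 h] at hEq
      exact absurd (ip.memS hi hEq).2 (hBGmem k (by omega))
    · rw [cyc_ge3 h] at hEq
      exact absurd (ip.memA hi hEq) (hAGmem (k + 1) (by omega) (by omega))
  -- injectivity
  have injf : ∀ i j, i < ℓ → j < ℓ → cyc q ip.P AG BG i = cyc q ip.P AG BG j → i = j := by
    intro i j hi hj hEq
    by_cases h1 : i < q <;> by_cases h2 : j < q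
    · rw [cyc_lt h1, cyc_lt h2] at hEq
      exact ip.inj h1 h2 hEq
    · have hj0 : j = q + (j - q) := by omega
      rw [cyc_lt h1, hj0] at hEq
      exact absurd hEq (mixne i (j - q) h1 (by omega))
    · have hi0 : i = q + (i - q) := by omega
      rw [cyc_lt h2, hi0] at hEq
      exact absurd hEq.symm (mixne j (i - q) h2 (by omega))
    · have hi0 : i = q + (i - q) := by omega
      have hj0 : j = q + (j - q) := by omega
      rw [hi0, hj0] at hEq
      set r := i - q with hr
      set r' := j - q with hr'
      have hrb : r ≤ 4 * t - 2 := by omega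
      have hrb' : r' ≤ 4 * t - 2 := by omega
      have h4 : r = 4 * (r / 4) ∨ r = 4 * (r / 4) + 1 ∨ r = 4 * (r / 4) + 2 ∨
          r = 4 * (r / 4) + 3 := by omega
      have h4' : r' = 4 * (r' / 4) ∨ r' = 4 * (r' / 4) + 1 ∨ r' = 4 * (r' / 4) + 2 ∨
          r' = 4 * (r' / 4) + 3 := by omega
      set k := r / 4 with hk
      set k' := r' / 4 with hk'
      rcases h4 with h | h | h | h <;> rcases h4' with h' | h' | h' | h'
      · rw [cyc_ge0 h, cyc_ge0 h'] at hEq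
        rw [sv_inj] at hEq
        have := hBGinj _ _ (by omega) (by omega) hEq.2
        omega
      · rw [cyc_ge0 h, cyc_ge1 h'] at hEq; exact absurd hEq (sv_ne_bv)
      · rw [cyc_ge0 h, cyc_ge2 h'] at hEq
        rw [sv_inj] at hEq
        have h5 := hBGinj _ _ (by omega) (by omega) hEq.2
        have h6 := hAGinj _ _ (by omega) (by omega) hEq.1
        omega
      · rw [cyc_ge0 h, cyc_ge3 h'] at hEq; exact absurd hEq (sv_ne_av)
      · rw [cyc_ge1 h, cyc_ge0 h'] at hEq; exact absurd hEq (bv_ne_sv)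
      · rw [cyc_ge1 h, cyc_ge1 h'] at hEq
        rw [bv_inj] at hEq
        have := hBGinj _ _ (by omega) (by omega) hEq
        omega
      · rw [cyc_ge1 h, cyc_ge2 h'] at hEq; exact absurd hEq (bv_ne_sv)
      · rw [cyc_ge1 h, cyc_ge3 h'] at hEq; exact absurd hEq (bv_ne_av)
      · rw [cyc_ge2 h, cyc_ge0 h'] at hEq
        rw [sv_inj] at hEq
        have h5 := hBGinj _ _ (by omega) (by omega) hEq.2
        have h6 := hAGinj _ _ (by omega) (by omega) hEq.1
        omega
      · rw [cyc_ge2 h, cyc_ge1 h'] at hEq; exact absurd hEq (sv_ne_bv)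
      · rw [cyc_ge2 h, cyc_ge2 h'] at hEq
        rw [sv_inj] at hEq
        have := hBGinj _ _ (by omega) (by omega) hEq.2
        omega
      · rw [cyc_ge2 h, cyc_ge3 h'] at hEq; exact absurd hEq (sv_ne_av)
      · rw [cyc_ge3 h, cyc_ge0 h'] at hEq; exact absurd hEq (av_ne_sv)
      · rw [cyc_ge3 h, cyc_ge1 h'] at hEq; exact absurd hEq (av_ne_bv)
      · rw [cyc_ge3 h, cyc_ge2 h'] at hEq; exact absurd hEq (av_ne_sv)
      · rw [cyc_ge3 h, cyc_ge3 h'] at hEq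
        rw [av_inj] at hEq
        have := hAGinj _ _ (by omega) (by omega) hEq
        omega
  -- the full adjacency characterisation
  have main : ∀ i j : Fin ℓ,
      ((SimpleGraph.fromRel (subdivRel ℓ s x y)).Adj
        (cyc q ip.P AG BG (i : ℕ)) (cyc q ip.P AG BG (j : ℕ)) ↔
      ((i : ℕ) + 1 = (j : ℕ) ∨ (j : ℕ) + 1 = (i : ℕ) ∨
        ((i : ℕ) = 0 ∧ (j : ℕ) = ℓ - 1) ∨ ((j : ℕ) = 0 ∧ (i : ℕ) = ℓ - 1))) := by
    intro i j
    have hi := i.isLt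
    have hj := j.isLt
    constructor
    · intro hadj
      by_cases h1 : (i : ℕ) < q <;> by_cases h2 : (j : ℕ) < q
      · rw [cyc_lt h1, cyc_lt h2] at hadj
        have := (ip.adj h1 h2).mp hadj
        omega
      · have hj0 : (j : ℕ) = q + ((j : ℕ) - q) := by omega
        rw [cyc_lt h1, hj0] at hadj
        have := mix _ _ h1 (by omega) hadj
        omega
      · have hi0 : (i : ℕ) = q + ((i : ℕ) - q) := by omega
        rw [cyc_lt h2, hi0] at hadj
        have := mix _ _ h2 (by omega) hadj.symm
        omega
      · have hi0 : (i : ℕ) = q + ((i : ℕ) - q) := by omega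
        have hj0 : (j : ℕ) = q + ((j : ℕ) - q) := by omega
        rw [hi0, hj0] at hadj
        have := gg _ _ (by omega) (by omega) hadj
        omega
    · intro h
      rcases h with h | h | ⟨ha, hb⟩ | ⟨ha, hb⟩
      · rw [← h]; exact edge _ (by omega)
      · rw [← h]; exact (edge _ (by omega)).symm
      · rw [ha, hb]; exact edge0
      · rw [ha, hb]; exact edge0.symm
  exact ⟨⟨⟨fun i => cyc q ip.P AG BG (i : ℕ),
    fun i j h => Fin.ext (injf _ _ i.isLt j.isLt h)⟩,
    fun {i j} => (main i j).trans (cycleGraph_adj_iff hℓ5 i j).symm⟩⟩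

/-! ### Basic induced paths -/

def path0Fun (u w β : Fin ℓ) : ℕ → SubdivVtx ℓ s := fun i =>
  if i = 0 then Av u else if i = 1 then Sv u β else if i = 2 then Bv β
  else if i = 3 then Sv w β else Av w

def path0 (u w β : Fin ℓ) (huw : u ≠ w) : IPath ℓ s x y 5 where
  P := path0Fun u w β
  u := u
  w := w
  SA := {u, w}
  SB := {β}
  hq := by omega
  inj := by
    intro i j hi hj h
    interval_cases i <;> interval_cases j <;> simp_all [path0Fun]
  adj := by
    intro i j hi hj
    interval_cases i <;> interval_cases j <;>
      simp [path0Fun, Av, Bv, Sv, fromRel_adj, subdivRel, huw, huw.symm, Prod.ext_iff]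
  first := by simp [path0Fun]
  last := by simp [path0Fun]
  huw := huw
  memA := by
    intro i a hi h
    interval_cases i <;> simp_all [path0Fun]
  memB := by
    intro i b hi h
    interval_cases i <;> simp_all [path0Fun]
  memS := by
    intro i a b hi h
    interval_cases i <;> simp_all [path0Fun]
  memP := by
    intro i j' k hi h
    interval_cases i <;> simp_all [path0Fun]

variable (x y) in
def path1Fun (j : Fin 3) : ℕ → SubdivVtx ℓ s := fun i =>
  if h0 : i = 0 then Av (x j)
  else if h : i ≤ s j then Pv j ⟨i - 1, by omega⟩
  else Av (y j)

lemma path1Fun_zero {j : Fin 3} : path1Fun (s := s) x y j 0 = Av (x j) := by simp [path1Fun]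

lemma path1Fun_mid {j : Fin 3} {i : ℕ} (h1 : 1 ≤ i) (h2 : i ≤ s j) :
    path1Fun (s := s) x y j i = Pv j ⟨i - 1, by omega⟩ := by
  rw [path1Fun, dif_neg (by omega), dif_pos h2]

lemma path1Fun_last {j : Fin 3} {i : ℕ} (h1 : s j < i) :
    path1Fun (s := s) x y j i = Av (y j) := by
  rw [path1Fun, dif_neg (by omega), dif_neg (by omega)]

def path1 (j : Fin 3) (h2 : 2 ≤ s j) (hne : x j ≠ y j) : IPath ℓ s x y (s j + 2) where
  P := path1Fun x y j
  u := x j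
  w := y j
  SA := {x j, y j}
  SB := ∅
  hq := by omega
  inj := by
    intro i i' hi hi' h
    rcases (by omega : i = 0 ∨ (1 ≤ i ∧ i ≤ s j) ∨ i = s j + 1) with h1 | ⟨ha, hb⟩ | h1 <;>
      rcases (by omega : i' = 0 ∨ (1 ≤ i' ∧ i' ≤ s j) ∨ i' = s j + 1) with h1' | ⟨ha', hb'⟩ | h1'
    · omega
    · rw [h1, path1Fun_zero, path1Fun_mid ha' hb'] at h
      exact absurd h av_ne_pv
    · rw [h1, h1', path1Fun_zero, path1Fun_last (by omega)] at h
      rw [av_inj] at h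
      exact absurd h hne
    · rw [h1', path1Fun_zero, path1Fun_mid ha hb] at h
      exact absurd h pv_ne_av
    · rw [path1Fun_mid ha hb, path1Fun_mid ha' hb', pv_inj] at h
      simp only [Fin.val_mk] at h
      omega
    · rw [h1', path1Fun_mid ha hb, path1Fun_last (by omega)] at h
      exact absurd h pv_ne_av
    · rw [h1, h1', path1Fun_zero, path1Fun_last (by omega)] at h
      rw [av_inj] at h
      exact absurd h.symm hne
    · rw [h1, path1Fun_last (by omega), path1Fun_mid ha' hb'] at h
      exact absurd h av_ne_pv
    · omega
  adj := by
    intro i i' hi hi'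
    rcases (by omega : i = 0 ∨ (1 ≤ i ∧ i ≤ s j) ∨ i = s j + 1) with h1 | ⟨ha, hb⟩ | h1 <;>
      rcases (by omega : i' = 0 ∨ (1 ≤ i' ∧ i' ≤ s j) ∨ i' = s j + 1) with h1' | ⟨ha', hb'⟩ | h1'
    · rw [h1, h1', path1Fun_zero]
      exact iff_of_false (adj_av_av x y) (by omega)
    · rw [h1, path1Fun_zero, path1Fun_mid ha' hb', adj_av_pv]
      simp [hne] <;> omega
    · rw [h1, h1', path1Fun_zero, path1Fun_last (by omega)]
      exact iff_of_false (adj_av_av x y) (by omega)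
    · rw [h1', path1Fun_zero, path1Fun_mid ha hb, adj_pv_av]
      simp [hne] <;> omega
    · rw [path1Fun_mid ha hb, path1Fun_mid ha' hb', adj_pv_pv]
      simp <;> omega
    · rw [h1', path1Fun_mid ha hb, path1Fun_last (by omega), adj_pv_av]
      simp [hne.symm] <;> omega
    · rw [h1, h1', path1Fun_zero, path1Fun_last (by omega)]
      exact iff_of_false (adj_av_av x y) (by omega)
    · rw [h1, path1Fun_last (by omega), path1Fun_mid ha' hb', adj_av_pv]
      simp [hne.symm] <;> omega
    · rw [h1, h1', path1Fun_last (by omega)]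
      exact iff_of_false (adj_av_av x y) (by omega)
  first := path1Fun_zero
  last := by
    rw [(by omega : s j + 2 - 1 = s j + 1), path1Fun_last (by omega)]
  huw := hne
  memA := by
    intro i a hi h
    rcases (by omega : i = 0 ∨ (1 ≤ i ∧ i ≤ s j) ∨ i = s j + 1) with h1 | ⟨ha, hb⟩ | h1
    · rw [h1, path1Fun_zero, av_inj] at h
      simp [← h]
    · rw [path1Fun_mid ha hb] at h
      exact absurd h pv_ne_av
    · rw [h1, path1Fun_last (by omega), av_inj] at h
      simp [← h]
  memB := by
    intro i b hi h
    rcases (by omega : i = 0 ∨ (1 ≤ i ∧ i ≤ s j) ∨ i = s j + 1) with h1 | ⟨ha, hb⟩ | h1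
    · rw [h1, path1Fun_zero] at h; exact absurd h av_ne_bv
    · rw [path1Fun_mid ha hb] at h; exact absurd h pv_ne_bv
    · rw [h1, path1Fun_last (by omega)] at h; exact absurd h av_ne_bv
  memS := by
    intro i a b hi h
    rcases (by omega : i = 0 ∨ (1 ≤ i ∧ i ≤ s j) ∨ i = s j + 1) with h1 | ⟨ha, hb⟩ | h1
    · rw [h1, path1Fun_zero] at h; exact absurd h av_ne_sv
    · rw [path1Fun_mid ha hb] at h; exact absurd h pv_ne_sv
    · rw [h1, path1Fun_last (by omega)] at h; exact absurd h av_ne_sv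
  memP := by
    intro i j' k hi h
    rcases (by omega : i = 0 ∨ (1 ≤ i ∧ i ≤ s j) ∨ i = s j + 1) with h1 | ⟨ha, hb⟩ | h1
    · rw [h1, path1Fun_zero] at h; exact absurd h av_ne_pv
    · rw [path1Fun_mid ha hb, pv_inj] at h
      obtain ⟨rfl, -⟩ := h
      simp
    · rw [h1, path1Fun_last (by omega)] at h; exact absurd h av_ne_pv

/-! ### Appending two induced paths through a fresh hop -/

def appendFun (q1 : ℕ) (P1 P2 : ℕ → SubdivVtx ℓ s) (w1 u2 β : Fin ℓ) : ℕ → SubdivVtx ℓ s :=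
  fun i =>
    if i < q1 then P1 i
    else if i = q1 then Sv w1 β
    else if i = q1 + 1 then Bv β
    else if i = q1 + 2 then Sv u2 β
    else P2 (i - (q1 + 3))

variable {q1 q2 : ℕ} {P1 P2 : ℕ → SubdivVtx ℓ s} {w1 u2 β : Fin ℓ}

lemma appendFun_lt {i : ℕ} (h : i < q1) : appendFun q1 P1 P2 w1 u2 β i = P1 i := by
  simp [appendFun, h]

lemma appendFun_hop0 : appendFun q1 P1 P2 w1 u2 β q1 = Sv w1 β := by
  simp [appendFun]

lemma appendFun_hop1 : appendFun q1 P1 P2 w1 u2 β (q1 + 1) = Bv β := by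
  rw [appendFun, if_neg (by omega), if_neg (by omega), if_pos rfl]

lemma appendFun_hop2 : appendFun q1 P1 P2 w1 u2 β (q1 + 2) = Sv u2 β := by
  rw [appendFun, if_neg (by omega), if_neg (by omega), if_neg (by omega), if_pos rfl]

lemma appendFun_ge {i : ℕ} (h : q1 + 3 ≤ i) :
    appendFun q1 P1 P2 w1 u2 β i = P2 (i - (q1 + 3)) := by
  rw [appendFun, if_neg (by omega), if_neg (by omega), if_neg (by omega), if_neg (by omega)]

def append (ip1 : IPath ℓ s x y q1) (ip2 : IPath ℓ s x y q2) (β : Fin ℓ)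
    (hdA : Disjoint ip1.SA ip2.SA) (hdB : Disjoint ip1.SB ip2.SB)
    (hβ1 : β ∉ ip1.SB) (hβ2 : β ∉ ip2.SB) : IPath ℓ s x y (q1 + q2 + 3) := by
  have hq1 := ip1.hq
  have hq2 := ip2.hq
  have hw1 : ip1.w ∈ ip1.SA := ip1.memA (by omega) ip1.last
  have hu1 : ip1.u ∈ ip1.SA := ip1.memA (by omega) ip1.first
  have hw2 : ip2.w ∈ ip2.SA := ip2.memA (by omega) ip2.last
  have hu2 : ip2.u ∈ ip2.SA := ip2.memA (by omega) ip2.first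
  have hnAB : ∀ a, a ∈ ip1.SA → a ∈ ip2.SA → False := fun a h1 h2 =>
    Finset.disjoint_left.mp hdA h1 h2
  have hnB : ∀ b, b ∈ ip1.SB → b ∈ ip2.SB → False := fun b h1 h2 =>
    Finset.disjoint_left.mp hdB h1 h2
  -- no edges between the two paths
  have cross : ∀ i i', i < q1 → i' < q2 →
      ¬ (SimpleGraph.fromRel (subdivRel ℓ s x y)).Adj (ip1.P i) (ip2.P i') := by
    intro i i' hi hi' hadj
    rcases vtx_cases (ip1.P i) with ⟨a, h1⟩ | ⟨b, h1⟩ | ⟨a, b, h1⟩ | ⟨j, k, h1⟩ <;>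
      rcases vtx_cases (ip2.P i') with ⟨a', h2⟩ | ⟨b', h2⟩ | ⟨a', b', h2⟩ | ⟨j', k', h2⟩ <;>
      rw [h1, h2] at hadj
    · exact absurd hadj (adj_av_av x y)
    · exact absurd hadj (adj_av_bv x y)
    · rw [adj_av_sv] at hadj
      exact hnAB a (ip1.memA hi h1) (hadj ▸ (ip2.memS hi' h2).1)
    · rw [adj_av_pv] at hadj
      rcases hadj with ⟨h, -⟩ | ⟨h, -⟩
      · exact hnAB a (ip1.memA hi h1) (h ▸ (ip2.memP hi' h2).1)
      · exact hnAB a (ip1.memA hi h1) (h ▸ (ip2.memP hi' h2).2)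
    · exact absurd hadj (adj_bv_av x y)
    · exact absurd hadj (adj_bv_bv x y)
    · rw [adj_bv_sv] at hadj
      exact hnB b (ip1.memB hi h1) (hadj ▸ (ip2.memS hi' h2).2)
    · exact absurd hadj (adj_bv_pv x y)
    · rw [adj_sv_av] at hadj
      exact hnAB a' (hadj ▸ (ip1.memS hi h1).1) (ip2.memA hi' h2)
    · rw [adj_sv_bv] at hadj
      exact hnB b' (hadj ▸ (ip1.memS hi h1).2) (ip2.memB hi' h2)
    · exact absurd hadj (adj_sv_sv x y)
    · exact absurd hadj (adj_sv_pv x y)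
    · rw [adj_pv_av] at hadj
      rcases hadj with ⟨h, -⟩ | ⟨h, -⟩
      · exact hnAB a' (h ▸ (ip1.memP hi h1).1) (ip2.memA hi' h2)
      · exact hnAB a' (h ▸ (ip1.memP hi h1).2) (ip2.memA hi' h2)
    · exact absurd hadj (adj_pv_bv x y)
    · exact absurd hadj (adj_pv_sv x y)
    · rw [adj_pv_pv] at hadj
      exact hnAB (x j) (ip1.memP hi h1).1 (hadj.1 ▸ (ip2.memP hi' h2).1)
  -- and the two paths are vertex disjoint
  have crossne : ∀ i i', i < q1 → i' < q2 → ip1.P i ≠ ip2.P i' := by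
    intro i i' hi hi' hEq
    rcases vtx_cases (ip1.P i) with ⟨a, h1⟩ | ⟨b, h1⟩ | ⟨a, b, h1⟩ | ⟨j, k, h1⟩ <;>
      rcases vtx_cases (ip2.P i') with ⟨a', h2⟩ | ⟨b', h2⟩ | ⟨a', b', h2⟩ | ⟨j', k', h2⟩ <;>
      rw [h1, h2] at hEq
    · rw [av_inj] at hEq
      exact hnAB a (ip1.memA hi h1) (hEq ▸ (ip2.memA hi' h2))
    · exact absurd hEq av_ne_bv
    · exact absurd hEq av_ne_sv
    · exact absurd hEq av_ne_pv
    · exact absurd hEq bv_ne_av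
    · rw [bv_inj] at hEq
      exact hnB b (ip1.memB hi h1) (hEq ▸ (ip2.memB hi' h2))
    · exact absurd hEq bv_ne_sv
    · exact absurd hEq bv_ne_pv
    · exact absurd hEq sv_ne_av
    · exact absurd hEq sv_ne_bv
    · rw [sv_inj] at hEq
      exact hnB b ((ip1.memS hi h1).2) (hEq.2 ▸ (ip2.memS hi' h2).2)
    · exact absurd hEq sv_ne_pv
    · exact absurd hEq pv_ne_av
    · exact absurd hEq pv_ne_bv
    · exact absurd hEq pv_ne_sv
    · rw [pv_inj] at hEq
      exact hnAB (x j) (ip1.memP hi h1).1 (hEq.1 ▸ (ip2.memP hi' h2).1)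
  -- adjacency of P1-vertices with the hop vertices
  have hop0P1 : ∀ i, i < q1 →
      ((SimpleGraph.fromRel (subdivRel ℓ s x y)).Adj (ip1.P i) (Sv ip1.w β) ↔ i = q1 - 1) := by
    intro i hi
    constructor
    · intro hadj
      rcases vtx_cases (ip1.P i) with ⟨a, h1⟩ | ⟨b, h1⟩ | ⟨a, b, h1⟩ | ⟨j, k, h1⟩ <;>
        rw [h1] at hadj
      · rw [adj_av_sv] at hadj
        exact ip1.inj hi (by omega) (by rw [h1, hadj, ip1.last])
      · rw [adj_bv_sv] at hadj
        exact absurd (ip1.memB hi h1) (hadj ▸ hβ1)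
      · exact absurd hadj (adj_sv_sv x y)
      · exact absurd hadj (adj_pv_sv x y)
    · intro h
      rw [h, ip1.last, adj_av_sv]
  have hop1P1 : ∀ i, i < q1 →
      ¬ (SimpleGraph.fromRel (subdivRel ℓ s x y)).Adj (ip1.P i) (Bv β) := by
    intro i hi hadj
    rcases vtx_cases (ip1.P i) with ⟨a, h1⟩ | ⟨b, h1⟩ | ⟨a, b, h1⟩ | ⟨j, k, h1⟩ <;>
      rw [h1] at hadj
    · exact absurd hadj (adj_av_bv x y)
    · exact absurd hadj (adj_bv_bv x y)
    · rw [adj_sv_bv] at hadj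
      exact absurd ((ip1.memS hi h1).2) (hadj ▸ hβ1)
    · exact absurd hadj (adj_pv_bv x y)
  have hop2P1 : ∀ i, i < q1 →
      ¬ (SimpleGraph.fromRel (subdivRel ℓ s x y)).Adj (ip1.P i) (Sv ip2.u β) := by
    intro i hi hadj
    rcases vtx_cases (ip1.P i) with ⟨a, h1⟩ | ⟨b, h1⟩ | ⟨a, b, h1⟩ | ⟨j, k, h1⟩ <;>
      rw [h1] at hadj
    · rw [adj_av_sv] at hadj
      exact hnAB a (ip1.memA hi h1) (hadj ▸ hu2)
    · rw [adj_bv_sv] at hadj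
      exact absurd (ip1.memB hi h1) (hadj ▸ hβ1)
    · exact absurd hadj (adj_sv_sv x y)
    · exact absurd hadj (adj_pv_sv x y)
  have hop0P2 : ∀ i, i < q2 →
      ¬ (SimpleGraph.fromRel (subdivRel ℓ s x y)).Adj (ip2.P i) (Sv ip1.w β) := by
    intro i hi hadj
    rcases vtx_cases (ip2.P i) with ⟨a, h1⟩ | ⟨b, h1⟩ | ⟨a, b, h1⟩ | ⟨j, k, h1⟩ <;>
      rw [h1] at hadj
    · rw [adj_av_sv] at hadj
      exact hnAB a (hadj ▸ hw1) (ip2.memA hi h1)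
    · rw [adj_bv_sv] at hadj
      exact absurd (ip2.memB hi h1) (hadj ▸ hβ2)
    · exact absurd hadj (adj_sv_sv x y)
    · exact absurd hadj (adj_pv_sv x y)
  have hop1P2 : ∀ i, i < q2 →
      ¬ (SimpleGraph.fromRel (subdivRel ℓ s x y)).Adj (ip2.P i) (Bv β) := by
    intro i hi hadj
    rcases vtx_cases (ip2.P i) with ⟨a, h1⟩ | ⟨b, h1⟩ | ⟨a, b, h1⟩ | ⟨j, k, h1⟩ <;>
      rw [h1] at hadj
    · exact absurd hadj (adj_av_bv x y)
    · exact absurd hadj (adj_bv_bv x y)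
    · rw [adj_sv_bv] at hadj
      exact absurd ((ip2.memS hi h1).2) (hadj ▸ hβ2)
    · exact absurd hadj (adj_pv_bv x y)
  have hop2P2 : ∀ i, i < q2 →
      ((SimpleGraph.fromRel (subdivRel ℓ s x y)).Adj (ip2.P i) (Sv ip2.u β) ↔ i = 0) := by
    intro i hi
    constructor
    · intro hadj
      rcases vtx_cases (ip2.P i) with ⟨a, h1⟩ | ⟨b, h1⟩ | ⟨a, b, h1⟩ | ⟨j, k, h1⟩ <;>
        rw [h1] at hadj
      · rw [adj_av_sv] at hadj
        exact ip2.inj hi (by omega) (by rw [h1, hadj, ip2.first])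
      · rw [adj_bv_sv] at hadj
        exact absurd (ip2.memB hi h1) (hadj ▸ hβ2)
      · exact absurd hadj (adj_sv_sv x y)
      · exact absurd hadj (adj_pv_sv x y)
    · intro h
      rw [h, ip2.first, adj_av_sv]
  -- vertex-disjointness of hop vertices from the paths
  have ne0P1 : ∀ i, i < q1 → ip1.P i ≠ Sv ip1.w β := fun i hi hEq =>
    absurd ((ip1.memS hi hEq).2) hβ1
  have ne1P1 : ∀ i, i < q1 → ip1.P i ≠ Bv β := fun i hi hEq =>
    absurd (ip1.memB hi hEq) hβ1
  have ne2P1 : ∀ i, i < q1 → ip1.P i ≠ Sv ip2.u β := fun i hi hEq =>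
    absurd ((ip1.memS hi hEq).2) hβ1
  have ne0P2 : ∀ i, i < q2 → ip2.P i ≠ Sv ip1.w β := fun i hi hEq =>
    absurd ((ip2.memS hi hEq).2) hβ2
  have ne1P2 : ∀ i, i < q2 → ip2.P i ≠ Bv β := fun i hi hEq =>
    absurd (ip2.memB hi hEq) hβ2
  have ne2P2 : ∀ i, i < q2 → ip2.P i ≠ Sv ip2.u β := fun i hi hEq =>
    absurd ((ip2.memS hi hEq).2) hβ2
  refine
  { P := appendFun q1 ip1.P ip2.P ip1.w ip2.u β
    u := ip1.u
    w := ip2.w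
    SA := ip1.SA ∪ ip2.SA
    SB := insert β (ip1.SB ∪ ip2.SB)
    hq := by omega
    huw := fun h => hnAB ip1.u hu1 (h ▸ hw2)
    first := by rw [appendFun_lt (by omega), ip1.first]
    last := by
      rw [(by omega : q1 + q2 + 3 - 1 = q1 + q2 + 2), appendFun_ge (by omega),
        (by omega : q1 + q2 + 2 - (q1 + 3) = q2 - 1), ip2.last]
    inj := ?_
    adj := ?_
    memA := ?_
    memB := ?_
    memS := ?_
    memP := ?_ }
  · intro i i' hi hi' hEq
    rcases (by omega : i < q1 ∨ i = q1 ∨ i = q1 + 1 ∨ i = q1 + 2 ∨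
        (q1 + 3 ≤ i ∧ i - (q1 + 3) < q2)) with h1 | h1 | h1 | h1 | ⟨h1, h1b⟩ <;>
      rcases (by omega : i' < q1 ∨ i' = q1 ∨ i' = q1 + 1 ∨ i' = q1 + 2 ∨
        (q1 + 3 ≤ i' ∧ i' - (q1 + 3) < q2)) with h2 | h2 | h2 | h2 | ⟨h2, h2b⟩
    · rw [appendFun_lt h1, appendFun_lt h2] at hEq
      exact ip1.inj h1 h2 hEq
    · rw [appendFun_lt h1, h2, appendFun_hop0] at hEq
      exact absurd hEq (ne0P1 i h1)
    · rw [appendFun_lt h1, h2, appendFun_hop1] at hEq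
      exact absurd hEq (ne1P1 i h1)
    · rw [appendFun_lt h1, h2, appendFun_hop2] at hEq
      exact absurd hEq (ne2P1 i h1)
    · rw [appendFun_lt h1, appendFun_ge h2] at hEq
      exact absurd hEq (crossne i _ h1 h2b)
    · rw [appendFun_lt h2, h1, appendFun_hop0] at hEq
      exact absurd hEq.symm (ne0P1 i' h2)
    · omega
    · rw [h1, h2, appendFun_hop0, appendFun_hop1] at hEq
      exact absurd hEq sv_ne_bv
    · rw [h1, h2, appendFun_hop0, appendFun_hop2] at hEq
      rw [sv_inj] at hEq
      exact absurd (hEq.1 ▸ hw1) fun hh => hnAB _ hh hu2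
    · rw [h1, appendFun_hop0, appendFun_ge h2] at hEq
      exact absurd hEq.symm (ne0P2 _ h2b)
    · rw [appendFun_lt h2, h1, appendFun_hop1] at hEq
      exact absurd hEq.symm (ne1P1 i' h2)
    · rw [h1, h2, appendFun_hop1, appendFun_hop0] at hEq
      exact absurd hEq bv_ne_sv
    · omega
    · rw [h1, h2, appendFun_hop1, appendFun_hop2] at hEq
      exact absurd hEq bv_ne_sv
    · rw [h1, appendFun_hop1, appendFun_ge h2] at hEq
      exact absurd hEq.symm (ne1P2 _ h2b)
    · rw [appendFun_lt h2, h1, appendFun_hop2] at hEq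
      exact absurd hEq.symm (ne2P1 i' h2)
    · rw [h1, h2, appendFun_hop2, appendFun_hop0] at hEq
      rw [sv_inj] at hEq
      exact absurd (hEq.1 ▸ hu2) fun hh => hnAB _ hw1 hh
    · rw [h1, h2, appendFun_hop2, appendFun_hop1] at hEq
      exact absurd hEq sv_ne_bv
    · omega
    · rw [h1, appendFun_hop2, appendFun_ge h2] at hEq
      exact absurd hEq.symm (ne2P2 _ h2b)
    · rw [appendFun_lt h2, appendFun_ge h1] at hEq
      exact absurd hEq.symm (crossne i' _ h2 h1b)
    · rw [h2, appendFun_hop0, appendFun_ge h1] at hEq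
      exact absurd hEq (ne0P2 _ h1b)
    · rw [h2, appendFun_hop1, appendFun_ge h1] at hEq
      exact absurd hEq (ne1P2 _ h1b)
    · rw [h2, appendFun_hop2, appendFun_ge h1] at hEq
      exact absurd hEq (ne2P2 _ h1b)
    · rw [appendFun_ge h1, appendFun_ge h2] at hEq
      have := ip2.inj h1b h2b hEq
      omega
  · intro i i' hi hi'
    rcases (by omega : i < q1 ∨ i = q1 ∨ i = q1 + 1 ∨ i = q1 + 2 ∨
        (q1 + 3 ≤ i ∧ i - (q1 + 3) < q2)) with h1 | h1 | h1 | h1 | ⟨h1, h1b⟩ <;>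
      rcases (by omega : i' < q1 ∨ i' = q1 ∨ i' = q1 + 1 ∨ i' = q1 + 2 ∨
        (q1 + 3 ≤ i' ∧ i' - (q1 + 3) < q2)) with h2 | h2 | h2 | h2 | ⟨h2, h2b⟩
    · rw [appendFun_lt h1, appendFun_lt h2]
      exact ip1.adj h1 h2
    · rw [appendFun_lt h1, h2, appendFun_hop0, hop0P1 i h1]
      omega
    · rw [appendFun_lt h1, h2, appendFun_hop1]
      exact iff_of_false (hop1P1 i h1) (by omega)
    · rw [appendFun_lt h1, h2, appendFun_hop2]
      exact iff_of_false (hop2P1 i h1) (by omega)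
    · rw [appendFun_lt h1, appendFun_ge h2]
      exact iff_of_false (cross i _ h1 h2b) (by omega)
    · rw [appendFun_lt h2, h1, appendFun_hop0, SimpleGraph.adj_comm, hop0P1 i' h2]
      omega
    · rw [h1, h2, appendFun_hop0]
      exact iff_of_false (adj_sv_sv x y) (by omega)
    · rw [h1, h2, appendFun_hop0, appendFun_hop1]
      exact iff_of_true ((adj_sv_bv x y).mpr rfl) (by omega)
    · rw [h1, h2, appendFun_hop0, appendFun_hop2]
      exact iff_of_false (adj_sv_sv x y) (by omega)
    · rw [h1, appendFun_hop0, appendFun_ge h2, SimpleGraph.adj_comm]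
      exact iff_of_false (hop0P2 _ h2b) (by omega)
    · rw [appendFun_lt h2, h1, appendFun_hop1, SimpleGraph.adj_comm]
      exact iff_of_false (hop1P1 i' h2) (by omega)
    · rw [h1, h2, appendFun_hop1, appendFun_hop0]
      exact iff_of_true ((adj_bv_sv x y).mpr rfl) (by omega)
    · rw [h1, h2, appendFun_hop1]
      exact iff_of_false (adj_bv_bv x y) (by omega)
    · rw [h1, h2, appendFun_hop1, appendFun_hop2]
      exact iff_of_true ((adj_bv_sv x y).mpr rfl) (by omega)
    · rw [h1, appendFun_hop1, appendFun_ge h2, SimpleGraph.adj_comm]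
      exact iff_of_false (hop1P2 _ h2b) (by omega)
    · rw [appendFun_lt h2, h1, appendFun_hop2, SimpleGraph.adj_comm]
      exact iff_of_false (hop2P1 i' h2) (by omega)
    · rw [h1, h2, appendFun_hop2, appendFun_hop0]
      exact iff_of_false (adj_sv_sv x y) (by omega)
    · rw [h1, h2, appendFun_hop2, appendFun_hop1]
      exact iff_of_true ((adj_sv_bv x y).mpr rfl) (by omega)
    · rw [h1, h2, appendFun_hop2]
      exact iff_of_false (adj_sv_sv x y) (by omega)
    · rw [h1, appendFun_hop2, appendFun_ge h2, SimpleGraph.adj_comm, hop2P2 _ h2b]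
      omega
    · rw [appendFun_lt h2, appendFun_ge h1, SimpleGraph.adj_comm]
      exact iff_of_false (cross i' _ h2 h1b) (by omega)
    · rw [h2, appendFun_hop0, appendFun_ge h1]
      exact iff_of_false (hop0P2 _ h1b) (by omega)
    · rw [h2, appendFun_hop1, appendFun_ge h1]
      exact iff_of_false (hop1P2 _ h1b) (by omega)
    · rw [h2, appendFun_hop2, appendFun_ge h1, hop2P2 _ h1b]
      omega
    · rw [appendFun_ge h1, appendFun_ge h2, ip2.adj h1b h2b]
      omega
  · intro i a hi h
    rcases (by omega : i < q1 ∨ i = q1 ∨ i = q1 + 1 ∨ i = q1 + 2 ∨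
        (q1 + 3 ≤ i ∧ i - (q1 + 3) < q2)) with h1 | h1 | h1 | h1 | ⟨h1, h1b⟩
    · rw [appendFun_lt h1] at h
      exact Finset.mem_union_left _ (ip1.memA h1 h)
    · rw [h1, appendFun_hop0] at h; exact absurd h.symm av_ne_sv
    · rw [h1, appendFun_hop1] at h; exact absurd h.symm av_ne_bv
    · rw [h1, appendFun_hop2] at h; exact absurd h.symm av_ne_sv
    · rw [appendFun_ge h1] at h
      exact Finset.mem_union_right _ (ip2.memA h1b h)
  · intro i b hi h
    rcases (by omega : i < q1 ∨ i = q1 ∨ i = q1 + 1 ∨ i = q1 + 2 ∨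
        (q1 + 3 ≤ i ∧ i - (q1 + 3) < q2)) with h1 | h1 | h1 | h1 | ⟨h1, h1b⟩
    · rw [appendFun_lt h1] at h
      exact Finset.mem_insert_of_mem (Finset.mem_union_left _ (ip1.memB h1 h))
    · rw [h1, appendFun_hop0] at h; exact absurd h.symm bv_ne_sv
    · rw [h1, appendFun_hop1, bv_inj] at h
      rw [← h]; exact Finset.mem_insert_self _ _
    · rw [h1, appendFun_hop2] at h; exact absurd h.symm bv_ne_sv
    · rw [appendFun_ge h1] at h
      exact Finset.mem_insert_of_mem (Finset.mem_union_right _ (ip2.memB h1b h))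
  · intro i a b hi h
    rcases (by omega : i < q1 ∨ i = q1 ∨ i = q1 + 1 ∨ i = q1 + 2 ∨
        (q1 + 3 ≤ i ∧ i - (q1 + 3) < q2)) with h1 | h1 | h1 | h1 | ⟨h1, h1b⟩
    · rw [appendFun_lt h1] at h
      obtain ⟨hA, hB⟩ := ip1.memS h1 h
      exact ⟨Finset.mem_union_left _ hA,
        Finset.mem_insert_of_mem (Finset.mem_union_left _ hB)⟩
    · rw [h1, appendFun_hop0, sv_inj] at h
      exact ⟨h.1 ▸ Finset.mem_union_left _ hw1, h.2 ▸ Finset.mem_insert_self _ _⟩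
    · rw [h1, appendFun_hop1] at h; exact absurd h.symm sv_ne_bv
    · rw [h1, appendFun_hop2, sv_inj] at h
      exact ⟨h.1 ▸ Finset.mem_union_right _ hu2, h.2 ▸ Finset.mem_insert_self _ _⟩
    · rw [appendFun_ge h1] at h
      obtain ⟨hA, hB⟩ := ip2.memS h1b h
      exact ⟨Finset.mem_union_right _ hA,
        Finset.mem_insert_of_mem (Finset.mem_union_right _ hB)⟩
  · intro i j' k hi h
    rcases (by omega : i < q1 ∨ i = q1 ∨ i = q1 + 1 ∨ i = q1 + 2 ∨
        (q1 + 3 ≤ i ∧ i - (q1 + 3) < q2)) with h1 | h1 | h1 | h1 | ⟨h1, h1b⟩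
    · rw [appendFun_lt h1] at h
      obtain ⟨hA, hB⟩ := ip1.memP h1 h
      exact ⟨Finset.mem_union_left _ hA, Finset.mem_union_left _ hB⟩
    · rw [h1, appendFun_hop0] at h; exact absurd h.symm pv_ne_sv
    · rw [h1, appendFun_hop1] at h; exact absurd h.symm pv_ne_bv
    · rw [h1, appendFun_hop2] at h; exact absurd h.symm pv_ne_sv
    · rw [appendFun_ge h1] at h
      obtain ⟨hA, hB⟩ := ip2.memP h1b h
      exact ⟨Finset.mem_union_right _ hA, Finset.mem_union_right _ hB⟩

end Hole

theorem stmt9 (ℓ : ℕ) (hℓ : 24 ≤ ℓ) (s : Fin 3 → ℕ) (hs : ∀ j, s j = 2 ∨ s j = 4)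
    (x y : Fin 3 → Fin ℓ)
    (hx : Function.Injective x) (hy : Function.Injective y)
    (hxy : ∀ j k, x j ≠ y k) :
    HasHole (SimpleGraph.fromRel (subdivRel ℓ s x y)) ℓ := by
  refine ⟨by omega, ?_⟩
  have h2 : ∀ j, 2 ≤ s j := fun j => by rcases hs j with h | h <;> omega
  have hc2 : ∀ j, ({x j, y j} : Finset (Fin ℓ)).card ≤ 2 := fun j =>
    (Finset.card_insert_le _ _).trans (by simp)
  have hd : ∀ j k : Fin 3, j ≠ k → Disjoint ({x j, y j} : Finset (Fin ℓ)) {x k, y k} := by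
    intro j k hjk
    rw [Finset.disjoint_left]
    intro a ha hb
    simp only [Finset.mem_insert, Finset.mem_singleton] at ha hb
    rcases ha with rfl | rfl <;> rcases hb with h | h
    · exact hjk (hx h)
    · exact hxy j k h
    · exact absurd h.symm (hxy k j)
    · exact hjk (hy h)
  have hβ0 : (⟨0, by omega⟩ : Fin ℓ) ∉ (∅ : Finset (Fin ℓ)) := Finset.notMem_empty _
  have hβ1E : (⟨1, by omega⟩ : Fin ℓ) ∉ (∅ : Finset (Fin ℓ)) := Finset.notMem_empty _
  have hdBE : Disjoint (∅ : Finset (Fin ℓ)) (∅ : Finset (Fin ℓ)) := by simp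
  have hβ1ne : (⟨1, by omega⟩ : Fin ℓ) ∉
      insert (⟨0, by omega⟩ : Fin ℓ) ((∅ : Finset (Fin ℓ)) ∪ ∅) := by
    simp [Fin.ext_iff]
  have hdB2 : Disjoint (insert (⟨0, by omega⟩ : Fin ℓ) ((∅ : Finset (Fin ℓ)) ∪ ∅))
      (∅ : Finset (Fin ℓ)) := by simp
  rcases (by omega : ℓ % 4 = 0 ∨ ℓ % 4 = 1 ∨ ℓ % 4 = 2 ∨ ℓ % 4 = 3) with h4 | h4 | h4 | h4
  · -- ℓ ≡ 0 [MOD 4]: a single hop, q = 5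
    refine Hole.glue (Hole.path0 (x := x) (y := y) (x 0) (y 0) ⟨0, by omega⟩ (hxy 0 0))
      (t := (ℓ - 4) / 4) (by omega) (by omega) ?_ ?_
    · show ({x 0, y 0} : Finset (Fin ℓ)).card + (ℓ - 4) / 4 ≤ ℓ + 1
      have := hc2 0
      omega
    · show ({(⟨0, by omega⟩ : Fin ℓ)} : Finset (Fin ℓ)).card + (ℓ - 4) / 4 ≤ ℓ
      rw [Finset.card_singleton]
      omega
  · rcases (by
        by_cases h : ∃ j, s j = 4
        · exact Or.inl h
        · refine Or.inr fun j => ?_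
          rcases hs j with h' | h'
          · exact h'
          · exact absurd ⟨j, h'⟩ h :
        (∃ j, s j = 4) ∨ (∀ j, s j = 2)) with ⟨j, hj⟩ | hall
    · -- one long path, q = s j + 2 = 6
      refine Hole.glue (Hole.path1 j (h2 j) (hxy j j)) (t := (ℓ - 5) / 4)
        (by omega) (by omega) ?_ ?_
      · show ({x j, y j} : Finset (Fin ℓ)).card + (ℓ - 5) / 4 ≤ ℓ + 1
        have := hc2 j
        omega
      · show (∅ : Finset (Fin ℓ)).card + (ℓ - 5) / 4 ≤ ℓ
        rw [Finset.card_empty]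
        omega
    · -- three short paths, q = 18
      have h0 := hall 0; have h1 := hall 1; have h2' := hall 2
      refine Hole.glue
        (Hole.append
          (Hole.append (Hole.path1 0 (h2 0) (hxy 0 0)) (Hole.path1 1 (h2 1) (hxy 1 1))
            ⟨0, by omega⟩ (hd 0 1 (by decide)) hdBE hβ0 hβ0)
          (Hole.path1 2 (h2 2) (hxy 2 2)) ⟨1, by omega⟩
          (Finset.disjoint_union_left.mpr ⟨hd 0 2 (by decide), hd 1 2 (by decide)⟩)
          hdB2 hβ1ne hβ1E)
        (t := (ℓ - 17) / 4) (by omega) (by omega) ?_ ?_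
      · show (({x 0, y 0} ∪ {x 1, y 1} : Finset (Fin ℓ)) ∪ {x 2, y 2}).card + (ℓ - 17) / 4 ≤ ℓ + 1
        have hA := (Finset.card_union_le (({x 0, y 0} ∪ {x 1, y 1} : Finset (Fin ℓ))) {x 2, y 2})
        have hB := (Finset.card_union_le ({x 0, y 0} : Finset (Fin ℓ)) {x 1, y 1})
        have := hc2 0; have := hc2 1; have := hc2 2
        omega
      · show (insert (⟨1, by omega⟩ : Fin ℓ)
            ((insert (⟨0, by omega⟩ : Fin ℓ) ((∅ : Finset (Fin ℓ)) ∪ ∅)) ∪ ∅)).card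
            + (ℓ - 17) / 4 ≤ ℓ
        have hA := Finset.card_insert_le (⟨1, by omega⟩ : Fin ℓ)
          ((insert (⟨0, by omega⟩ : Fin ℓ) ((∅ : Finset (Fin ℓ)) ∪ ∅)) ∪ ∅)
        have hB := Finset.card_union_le
          (insert (⟨0, by omega⟩ : Fin ℓ) ((∅ : Finset (Fin ℓ)) ∪ ∅)) (∅ : Finset (Fin ℓ))
        have hC := Finset.card_insert_le (⟨0, by omega⟩ : Fin ℓ) ((∅ : Finset (Fin ℓ)) ∪ ∅)
        simp only [Finset.union_empty, Finset.card_empty] at hA hB hC ⊢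
        omega
  · -- ℓ ≡ 2 [MOD 4]: two paths of equal length
    obtain ⟨j, k, hjk, hsjk⟩ : ∃ j k : Fin 3, j ≠ k ∧ s j = s k := by
      rcases hs 0 with h0 | h0 <;> rcases hs 1 with h1 | h1 <;> rcases hs 2 with h2' | h2'
      · exact ⟨0, 1, by decide, by omega⟩
      · exact ⟨0, 1, by decide, by omega⟩
      · exact ⟨0, 2, by decide, by omega⟩
      · exact ⟨1, 2, by decide, by omega⟩
      · exact ⟨1, 2, by decide, by omega⟩
      · exact ⟨0, 2, by decide, by omega⟩
      · exact ⟨0, 1, by decide, by omega⟩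
      · exact ⟨0, 1, by decide, by omega⟩
    have hsj := hs j
    refine Hole.glue
      (Hole.append (Hole.path1 j (h2 j) (hxy j j)) (Hole.path1 k (h2 k) (hxy k k))
        ⟨0, by omega⟩ (hd j k hjk) hdBE hβ0 hβ0)
      (t := (ℓ + 1 - (s j + 2 + (s k + 2) + 3)) / 4) (by omega) (by omega) ?_ ?_
    · show (({x j, y j} : Finset (Fin ℓ)) ∪ {x k, y k}).card
        + (ℓ + 1 - (s j + 2 + (s k + 2) + 3)) / 4 ≤ ℓ + 1
      have hB := Finset.card_union_le ({x j, y j} : Finset (Fin ℓ)) {x k, y k}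
      have := hc2 j; have := hc2 k
      omega
    · show (insert (⟨0, by omega⟩ : Fin ℓ) ((∅ : Finset (Fin ℓ)) ∪ ∅)).card
        + (ℓ + 1 - (s j + 2 + (s k + 2) + 3)) / 4 ≤ ℓ
      have hC := Finset.card_insert_le (⟨0, by omega⟩ : Fin ℓ) ((∅ : Finset (Fin ℓ)) ∪ ∅)
      simp only [Finset.union_empty, Finset.card_empty] at hC ⊢
      omega
  · rcases (by
        by_cases h : ∃ j, s j = 2
        · exact Or.inl h
        · refine Or.inr fun j => ?_
          rcases hs j with h' | h'
          · exact absurd ⟨j, h'⟩ h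
          · exact h' :
        (∃ j, s j = 2) ∨ (∀ j, s j = 4)) with ⟨j, hj⟩ | hall
    · -- one short path, q = 4
      refine Hole.glue (Hole.path1 j (h2 j) (hxy j j)) (t := (ℓ - 3) / 4)
        (by omega) (by omega) ?_ ?_
      · show ({x j, y j} : Finset (Fin ℓ)).card + (ℓ - 3) / 4 ≤ ℓ + 1
        have := hc2 j
        omega
      · show (∅ : Finset (Fin ℓ)).card + (ℓ - 3) / 4 ≤ ℓ
        rw [Finset.card_empty]
        omega
    · -- three long paths, q = 24
      have h0 := hall 0; have h1 := hall 1; have h2' := hall 2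
      refine Hole.glue
        (Hole.append
          (Hole.append (Hole.path1 0 (h2 0) (hxy 0 0)) (Hole.path1 1 (h2 1) (hxy 1 1))
            ⟨0, by omega⟩ (hd 0 1 (by decide)) hdBE hβ0 hβ0)
          (Hole.path1 2 (h2 2) (hxy 2 2)) ⟨1, by omega⟩
          (Finset.disjoint_union_left.mpr ⟨hd 0 2 (by decide), hd 1 2 (by decide)⟩)
          hdB2 hβ1ne hβ1E)
        (t := (ℓ - 23) / 4) (by omega) (by omega) ?_ ?_
      · show (({x 0, y 0} ∪ {x 1, y 1} : Finset (Fin ℓ)) ∪ {x 2, y 2}).card + (ℓ - 23) / 4 ≤ ℓ + 1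
        have hA := (Finset.card_union_le (({x 0, y 0} ∪ {x 1, y 1} : Finset (Fin ℓ))) {x 2, y 2})
        have hB := (Finset.card_union_le ({x 0, y 0} : Finset (Fin ℓ)) {x 1, y 1})
        have := hc2 0; have := hc2 1; have := hc2 2
        omega
      · show (insert (⟨1, by omega⟩ : Fin ℓ)
            ((insert (⟨0, by omega⟩ : Fin ℓ) ((∅ : Finset (Fin ℓ)) ∪ ∅)) ∪ ∅)).card
            + (ℓ - 23) / 4 ≤ ℓ
        have hA := Finset.card_insert_le (⟨1, by omega⟩ : Fin ℓ)
          ((insert (⟨0, by omega⟩ : Fin ℓ) ((∅ : Finset (Fin ℓ)) ∪ ∅)) ∪ ∅)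
        have hB := Finset.card_union_le
          (insert (⟨0, by omega⟩ : Fin ℓ) ((∅ : Finset (Fin ℓ)) ∪ ∅)) (∅ : Finset (Fin ℓ))
        have hC := Finset.card_insert_le (⟨0, by omega⟩ : Fin ℓ) ((∅ : Finset (Fin ℓ)) ∪ ∅)
        simp only [Finset.union_empty, Finset.card_empty] at hA hB hC ⊢
        omega
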